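/- Let G be a graph, v a vertex with N3(v) ≠ ∅, and D a dominating set of G. Then there exists a dominating set D' of G with |D'| ≤ |D| and v ∈ D'. -/

import Mathlib

open Set

variable {V : Type*}

/-- Closed neighborhood N[v]. -/
def closedNbr (G : SimpleGraph V) (v : V) : Set V := insert v (G.neighborSet v)

/-- N1(v) = {u ∈ N(v) : N(u) \ N[v] ≠ ∅}. -/
def N1 (G : SimpleGraph V) (v : V) : Set V :=
  {u | u ∈ G.neighborSet v ∧ (G.neighborSet u \ closedNbr G v).Nonempty}

/-- N2(v) = {u ∈ N(v) \ N1(v) : N(u) ∩ N1(v) ≠ ∅}. -/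
def N2 (G : SimpleGraph V) (v : V) : Set V :=
  {u | u ∈ G.neighborSet v \ N1 G v ∧ (G.neighborSet u ∩ N1 G v).Nonempty}

/-- N3(v) = N(v) \ (N1(v) ∪ N2(v)). -/
def N3 (G : SimpleGraph V) (v : V) : Set V :=
  G.neighborSet v \ (N1 G v ∪ N2 G v)

/-- D is a dominating set: every vertex outside D has a neighbor in D. -/
def IsDomSet (G : SimpleGraph V) (D : Set V) : Prop :=
  ∀ u, u ∉ D → ∃ d ∈ D, G.Adj u d

/-- The domination number γ(G). -/
noncomputable def domNum (G : SimpleGraph V) : ℕ :=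
  sInf {n | ∃ D : Set V, IsDomSet G D ∧ D.ncard = n}

theorem stmt_3 [Fintype V] (G : SimpleGraph V) (v : V) (h : (N3 G v).Nonempty)
    (D : Set V) (hD : IsDomSet G D) :
    ∃ D' : Set V, IsDomSet G D' ∧ D'.ncard ≤ D.ncard ∧ v ∈ D' := by
  obtain ⟨x, hxN, hxNot⟩ := h
  by_cases hv : v ∈ D
  · exact ⟨D, hD, le_rfl, hv⟩
  -- x ∉ N1, x ∉ N2
  have hx1 : x ∉ N1 G v := fun h1 => hxNot (Or.inl h1)
  have hx2 : x ∉ N2 G v := fun h2 => hxNot (Or.inr h2)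
  have hNx : ∀ u, G.Adj x u → u ∈ closedNbr G v := by
    intro u hu
    by_contra hc
    exact hx1 ⟨hxN, u, by simpa [Set.mem_diff] using And.intro hu hc⟩
  have hNx1 : ∀ u, G.Adj x u → u ∉ N1 G v := by
    intro u hu hu1
    exact hx2 ⟨⟨hxN, hx1⟩, u, hu, hu1⟩
  -- find a dominator w of x in D
  have hxv : x ≠ v := fun e => G.loopless.irrefl v (e ▸ hxN)
  obtain ⟨w, hwD, hwadj⟩ : ∃ w ∈ D, w = x ∨ G.Adj x w := by
    by_cases hxD : x ∈ D
    · exact ⟨x, hxD, Or.inl rfl⟩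
    · obtain ⟨d, hdD, hd⟩ := hD x hxD
      exact ⟨d, hdD, Or.inr hd⟩
  -- w ∈ N(v) and N(w) ⊆ N[v]
  have hwv : G.Adj v w := by
    rcases hwadj with rfl | hadj
    · exact hxN
    · have := hNx w hadj
      rcases this with h1 | h2
      · exact absurd h1 (fun e => hv (e ▸ hwD))
      · exact h2
  have hwN1 : w ∉ N1 G v := by
    rcases hwadj with rfl | hadj
    · exact hx1
    · exact hNx1 w hadj
  have hNw : ∀ u, G.Adj w u → u = v ∨ G.Adj v u := by
    intro u hu
    by_contra hc
    push_neg at hc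
    exact hwN1 ⟨hwv, u, hu, by simp [closedNbr, SimpleGraph.mem_neighborSet, hc.1, hc.2]⟩
  refine ⟨insert v (D \ {w}), ?_, ?_, Set.mem_insert _ _⟩
  · intro u hu
    have huv : u ≠ v := fun e => hu (e ▸ Set.mem_insert _ _)
    by_cases huw : u = w
    · exact ⟨v, Set.mem_insert _ _, huw ▸ hwv.symm⟩
    · have huD : u ∉ D := fun hD' => hu (Set.mem_insert_of_mem _ ⟨hD', huw⟩)
      obtain ⟨d, hdD, hd⟩ := hD u huD
      by_cases hdw : d = w
      · rcases hNw u (hdw ▸ hd.symm) with e | hadj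
        · exact absurd e huv
        · exact ⟨v, Set.mem_insert _ _, hadj.symm⟩
      · exact ⟨d, Set.mem_insert_of_mem _ ⟨hdD, hdw⟩, hd⟩
  · calc (insert v (D \ {w})).ncard ≤ (D \ {w}).ncard + 1 :=
          Set.ncard_insert_le _ _
      _ = D.ncard := Set.ncard_diff_singleton_add_one hwD D.toFinite
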